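/- Let m∈C^∞(ℝ³) and let a,b:ℝ²→ℝ be continuous functions such that ∂_ξ m(x,ξ,η) − x ∂_η m(x,ξ,η) = (x·a(ξ,η) + b(ξ,η))·m(x,ξ,η) for all (x,ξ,η). Let f∈C^∞(ℝ²) with supp f ⊂ {(x,y): y≥x²}. Then for all (ξ,η), ∂_ξ R_m[f](ξ,η) − b(ξ,η) R_m[f](ξ,η) = ∂_η R_m[xf](ξ,η) + a(ξ,η) R_m[xf](ξ,η), i.e. D_b R_m[f] = D_a R_m[xf]. -/

import Mathlib

open MeasureTheory Set

/-- The weighted Radon transform `R_m[f](ξ,η) = ∫ f(x, ξx+η) m(x,ξ,η) dx`. -/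
noncomputable def radonW (f : ℝ → ℝ → ℝ) (m : ℝ → ℝ → ℝ → ℝ) (ξ η : ℝ) : ℝ :=
  ∫ x : ℝ, f x (ξ * x + η) * m x ξ η

/-- The weighted Radon transform of `x·f`:
`R_m[xf](ξ,η) = ∫ x f(x, ξx+η) m(x,ξ,η) dx`. -/
noncomputable def radonWx (f : ℝ → ℝ → ℝ) (m : ℝ → ℝ → ℝ → ℝ) (ξ η : ℝ) : ℝ :=
  ∫ x : ℝ, x * f x (ξ * x + η) * m x ξ η

lemma key_deriv (g g' : ℝ → ℝ → ℝ) (s₀ R : ℝ)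
    (hg : Continuous fun p : ℝ × ℝ => g p.1 p.2)
    (hg' : Continuous fun p : ℝ × ℝ => g' p.1 p.2)
    (h0 : ∀ x s, R ≤ |x| → s ∈ Metric.closedBall s₀ 1 → g x s = 0 ∧ g' x s = 0)
    (hd : ∀ x : ℝ, ∀ s ∈ Metric.ball s₀ 1, HasDerivAt (fun u => g x u) (g' x s) s) :
    HasDerivAt (fun s => ∫ x : ℝ, g x s) (∫ x : ℝ, g' x s₀) s₀ := by
  have habs : ∀ x : ℝ, x ∉ Icc (-R) R → R ≤ |x| := by
    intro x hx
    rcases abs_cases x with ⟨h1, _⟩ | ⟨h1, _⟩ <;> simp only [mem_Icc, not_and_or, not_le] at hx <;>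
      rcases hx with h | h <;> linarith
  obtain ⟨C, hC⟩ := (isCompact_Icc.prod (isCompact_closedBall s₀ 1)).exists_bound_of_continuousOn
    (hg'.continuousOn (s := Icc (-R) R ×ˢ Metric.closedBall s₀ 1))
  set bound : ℝ → ℝ := (Icc (-R) R).indicator fun _ => C with hbound
  have h := hasDerivAt_integral_of_dominated_loc_of_deriv_le (F := fun s x => g x s)
    (F' := fun s x => g' x s) (bound := bound) (μ := volume) (x₀ := s₀) (Metric.ball_mem_nhds s₀ one_pos)
    (Filter.Eventually.of_forall fun s =>
      (hg.comp (continuous_id.prodMk continuous_const)).aestronglyMeasurable)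
    ?_ (hg'.comp (continuous_id.prodMk continuous_const)).aestronglyMeasurable ?_ ?_ ?_
  · exact h.2
  · apply Continuous.integrable_of_hasCompactSupport
      (hg.comp (continuous_id.prodMk continuous_const))
    apply HasCompactSupport.intro isCompact_Icc
    intro x hx
    exact (h0 x s₀ (habs x hx) (Metric.mem_closedBall_self zero_le_one)).1
  · refine Filter.Eventually.of_forall fun x => fun s hs => ?_
    by_cases hx : x ∈ Icc (-R) R
    · rw [hbound, indicator_of_mem hx]
      exact hC (x, s) ⟨hx, Metric.ball_subset_closedBall hs⟩
    · rw [hbound, indicator_of_notMem hx]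
      show ‖g' x s‖ ≤ 0
      rw [(h0 x s (habs x hx) (Metric.ball_subset_closedBall hs)).2]
      simp
  · rw [hbound, integrable_indicator_iff measurableSet_Icc]
    exact integrableOn_const measure_Icc_lt_top.ne
  · exact Filter.Eventually.of_forall fun x => fun s hs => hd x s hs

lemma slice_int (G : ℝ → ℝ) (R : ℝ) (hG : Continuous G)
    (h0 : ∀ x, x ∉ Icc (-R) R → G x = 0) : Integrable G :=
  hG.integrable_of_hasCompactSupport (HasCompactSupport.intro isCompact_Icc h0)

theorem stmt11 (m : ℝ → ℝ → ℝ → ℝ)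
    (hm : ContDiff ℝ (⊤ : ℕ∞) (fun p : ℝ × ℝ × ℝ => m p.1 p.2.1 p.2.2))
    (a b : ℝ → ℝ → ℝ)
    (ha : Continuous (fun p : ℝ × ℝ => a p.1 p.2))
    (hb : Continuous (fun p : ℝ × ℝ => b p.1 p.2))
    (hpde : ∀ x ξ η : ℝ,
      deriv (fun s => m x s η) ξ - x * deriv (fun t => m x ξ t) η =
        (x * a ξ η + b ξ η) * m x ξ η)
    (f : ℝ → ℝ → ℝ)
    (hf : ContDiff ℝ (⊤ : ℕ∞) (fun p : ℝ × ℝ => f p.1 p.2))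
    (hsupp : ∀ x y : ℝ, y < x^2 → f x y = 0) :
    ∀ ξ η : ℝ,
      deriv (fun s => radonW f m s η) ξ - b ξ η * radonW f m ξ η =
        deriv (fun t => radonWx f m ξ t) η + a ξ η * radonWx f m ξ η := by
  intro ξ η
  have hfc : Continuous fun p : ℝ × ℝ => f p.1 p.2 := hf.continuous
  have hmc : Continuous fun p : ℝ × ℝ × ℝ => m p.1 p.2.1 p.2.2 := hm.continuous
  -- partial derivatives
  set fy : ℝ → ℝ → ℝ := fun x y => fderiv ℝ (fun q : ℝ × ℝ => f q.1 q.2) (x, y) (0, 1) with hfy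
  set mS : ℝ → ℝ → ℝ → ℝ :=
    fun x s t => fderiv ℝ (fun q : ℝ × ℝ × ℝ => m q.1 q.2.1 q.2.2) (x, s, t) (0, 1, 0) with hmS
  set mT : ℝ → ℝ → ℝ → ℝ :=
    fun x s t => fderiv ℝ (fun q : ℝ × ℝ × ℝ => m q.1 q.2.1 q.2.2) (x, s, t) (0, 0, 1) with hmT
  have hfyc : Continuous fun p : ℝ × ℝ => fy p.1 p.2 :=
    (hf.continuous_fderiv (by simp)).clm_apply continuous_const
  have hmSc : Continuous fun p : ℝ × ℝ × ℝ => mS p.1 p.2.1 p.2.2 :=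
    (hm.continuous_fderiv (by simp)).clm_apply continuous_const
  have hmTc : Continuous fun p : ℝ × ℝ × ℝ => mT p.1 p.2.1 p.2.2 :=
    (hm.continuous_fderiv (by simp)).clm_apply continuous_const
  -- derivative facts
  have hdfS : ∀ x s t : ℝ, HasDerivAt (fun u => f x (u * x + t)) (x * fy x (s * x + t)) s := by
    intro x s t
    have hcurve : HasDerivAt (fun u : ℝ => ((x : ℝ), u * x + t)) (0, x) s := by
      exact (hasDerivAt_const s x).prodMk (by simpa using ((hasDerivAt_id s).mul_const x).add_const t)
    have hF := (hf.differentiable (by simp) (x, s * x + t)).hasFDerivAt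
    have h := hF.comp_hasDerivAt s hcurve
    have heq : fderiv ℝ (fun q : ℝ × ℝ => f q.1 q.2) (x, s * x + t) (0, x)
        = x * fy x (s * x + t) := by
      rw [show ((0 : ℝ), x) = x • ((0 : ℝ), (1 : ℝ)) by simp, _root_.map_smul, smul_eq_mul, hfy]
    rw [heq] at h
    exact h
  have hdfT : ∀ x s t : ℝ, HasDerivAt (fun u => f x (s * x + u)) (fy x (s * x + t)) t := by
    intro x s t
    have hcurve : HasDerivAt (fun u : ℝ => ((x : ℝ), s * x + u)) (0, 1) t := by
      exact (hasDerivAt_const t x).prodMk (by simpa using (hasDerivAt_id t).const_add (s * x))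
    have hF := (hf.differentiable (by simp) (x, s * x + t)).hasFDerivAt
    exact hF.comp_hasDerivAt t hcurve
  have hdmS : ∀ x s t : ℝ, HasDerivAt (fun u => m x u t) (mS x s t) s := by
    intro x s t
    have hcurve : HasDerivAt (fun u : ℝ => ((x : ℝ), u, (t : ℝ))) (0, 1, 0) s :=
      (hasDerivAt_const s x).prodMk ((hasDerivAt_id s).prodMk (hasDerivAt_const s t))
    exact (hm.differentiable (by simp) (x, s, t)).hasFDerivAt.comp_hasDerivAt
      s hcurve
  have hdmT : ∀ x s t : ℝ, HasDerivAt (fun u => m x s u) (mT x s t) t := by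
    intro x s t
    have hcurve : HasDerivAt (fun u : ℝ => ((x : ℝ), (s : ℝ), u)) (0, 0, 1) t :=
      (hasDerivAt_const t x).prodMk ((hasDerivAt_const t s).prodMk (hasDerivAt_id t))
    exact (hm.differentiable (by simp) (x, s, t)).hasFDerivAt.comp_hasDerivAt
      t hcurve
  have hpde' : ∀ x s t : ℝ, mS x s t - x * mT x s t = (x * a s t + b s t) * m x s t := by
    intro x s t
    have := hpde x s t
    rwa [(hdmS x s t).deriv, (hdmT x s t).deriv] at this
  -- vanishing of fy below the parabola
  have hfy0 : ∀ x y : ℝ, y < x ^ 2 → fy x y = 0 := by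
    intro x y hy
    have hopen : IsOpen {p : ℝ × ℝ | p.2 < p.1 ^ 2} :=
      isOpen_lt continuous_snd (by fun_prop)
    have hev : (fun q : ℝ × ℝ => f q.1 q.2) =ᶠ[nhds (x, y)] fun _ => 0 := by
      filter_upwards [hopen.mem_nhds (by exact hy : ((x, y) : ℝ × ℝ) ∈ _)] with p hp
      exact hsupp p.1 p.2 hp
    rw [hfy]
    simp only [hev.fderiv_eq, fderiv_fun_const]
    rfl
  -- the cutoff radius
  set R : ℝ := |ξ| + |η| + 3 with hRdef
  have hpar : ∀ x s t : ℝ, R ≤ |x| → |s - ξ| ≤ 1 → |t - η| ≤ 1 → s * x + t < x ^ 2 := by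
    intro x s t hx hs ht
    have h1 : |s| ≤ |ξ| + 1 := by
      have := abs_sub_abs_le_abs_sub s ξ; linarith
    have h2 : |t| ≤ |η| + 1 := by
      have := abs_sub_abs_le_abs_sub t η; linarith
    have h3 : s * x ≤ |s| * |x| := (le_abs_self _).trans (abs_mul s x).le
    have h4 : t ≤ |t| := le_abs_self t
    have h5 : (1 : ℝ) ≤ |x| := by
      have := abs_nonneg ξ; have := abs_nonneg η; linarith
    have h6 : x ^ 2 = |x| * |x| := by rw [← sq_abs]; ring
    nlinarith [abs_nonneg s, abs_nonneg x, abs_nonneg ξ, abs_nonneg η]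
  -- the two integrands and their derivatives
  set g₁ : ℝ → ℝ → ℝ := fun x s => f x (s * x + η) * m x s η with hg₁
  set g₁' : ℝ → ℝ → ℝ :=
    fun x s => x * fy x (s * x + η) * m x s η + f x (s * x + η) * mS x s η with hg₁'
  set g₂ : ℝ → ℝ → ℝ := fun x t => x * (f x (ξ * x + t) * m x ξ t) with hg₂
  set g₂' : ℝ → ℝ → ℝ :=
    fun x t => x * (fy x (ξ * x + t) * m x ξ t + f x (ξ * x + t) * mT x ξ t) with hg₂'
  have cg₁ : Continuous fun p : ℝ × ℝ => g₁ p.1 p.2 := by rw [hg₁]; fun_prop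
  have cg₁' : Continuous fun p : ℝ × ℝ => g₁' p.1 p.2 := by rw [hg₁']; fun_prop
  have cg₂ : Continuous fun p : ℝ × ℝ => g₂ p.1 p.2 := by rw [hg₂]; fun_prop
  have cg₂' : Continuous fun p : ℝ × ℝ => g₂' p.1 p.2 := by rw [hg₂']; fun_prop
  have h0₁ : ∀ x s, R ≤ |x| → s ∈ Metric.closedBall ξ 1 → g₁ x s = 0 ∧ g₁' x s = 0 := by
    intro x s hx hs
    rw [Metric.mem_closedBall, Real.dist_eq] at hs
    have hlt := hpar x s η hx hs (by simp)
    simp only [hg₁, hg₁', hsupp _ _ hlt, hfy0 _ _ hlt]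
    constructor <;> ring
  have h0₂ : ∀ x t, R ≤ |x| → t ∈ Metric.closedBall η 1 → g₂ x t = 0 ∧ g₂' x t = 0 := by
    intro x t hx ht
    rw [Metric.mem_closedBall, Real.dist_eq] at ht
    have hlt := hpar x ξ t hx (by simp) ht
    simp only [hg₂, hg₂', hsupp _ _ hlt, hfy0 _ _ hlt]
    constructor <;> ring
  have hd₁ : ∀ x : ℝ, ∀ s ∈ Metric.ball ξ 1, HasDerivAt (fun u => g₁ x u) (g₁' x s) s :=
    fun x s _ => (hdfS x s η).mul (hdmS x s η)
  have hd₂ : ∀ x : ℝ, ∀ t ∈ Metric.ball η 1, HasDerivAt (fun u => g₂ x u) (g₂' x t) t :=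
    fun x t _ => ((hdfT x ξ t).mul (hdmT x ξ t)).const_mul x
  have hK1 := key_deriv g₁ g₁' ξ R cg₁ cg₁' h0₁ hd₁
  have hK2 := key_deriv g₂ g₂' η R cg₂ cg₂' h0₂ hd₂
  -- rewrite the radon transforms
  have habs : ∀ x : ℝ, x ∉ Icc (-R) R → R ≤ |x| := by
    intro x hx
    rcases abs_cases x with ⟨h1, _⟩ | ⟨h1, _⟩ <;> simp only [mem_Icc, not_and_or, not_le] at hx <;>
      rcases hx with h | h <;> linarith
  have e1 : (fun s => radonW f m s η) = fun s => ∫ x : ℝ, g₁ x s := rfl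
  have e2 : (fun t => radonWx f m ξ t) = fun t => ∫ x : ℝ, g₂ x t := by
    funext t
    rw [radonWx]
    congr 1; funext x; rw [hg₂]; ring
  have eW : radonW f m ξ η = ∫ x : ℝ, g₁ x ξ := rfl
  have eWx : radonWx f m ξ η = ∫ x : ℝ, g₂ x η := by
    rw [radonWx]; congr 1; funext x; rw [hg₂]; ring
  rw [e1, e2, eW, eWx, hK1.deriv, hK2.deriv]
  -- integrability of the slices
  have I1 : Integrable (fun x => g₁ x ξ) :=
    slice_int _ R (cg₁.comp (continuous_id.prodMk continuous_const))
      fun x hx => (h0₁ x ξ (habs x hx) (Metric.mem_closedBall_self zero_le_one)).1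
  have I2 : Integrable (fun x => g₂ x η) :=
    slice_int _ R (cg₂.comp (continuous_id.prodMk continuous_const))
      fun x hx => (h0₂ x η (habs x hx) (Metric.mem_closedBall_self zero_le_one)).1
  have I2' : Integrable (fun x => g₂' x η) :=
    slice_int _ R (cg₂'.comp (continuous_id.prodMk continuous_const))
      fun x hx => (h0₂ x η (habs x hx) (Metric.mem_closedBall_self zero_le_one)).2
  have hpt : (fun x => g₁' x ξ)
      = fun x => g₂' x η + (a ξ η * g₂ x η + b ξ η * g₁ x ξ) := by
    funext x
    rw [hg₁', hg₂', hg₁, hg₂]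
    linear_combination (f x (ξ * x + η)) * (hpde' x ξ η)
  clear_value fy mS mT R g₁ g₁' g₂ g₂'
  have J1 : Integrable (fun x => a ξ η * g₂ x η) volume := I2.const_mul _
  have J2 : Integrable (fun x => b ξ η * g₁ x ξ) volume := I1.const_mul _
  have J12 : Integrable (fun x => a ξ η * g₂ x η + b ξ η * g₁ x ξ) volume := J1.add J2
  have E1 : ∫ x : ℝ, g₁' x ξ
      = (∫ x : ℝ, g₂' x η)
        + (a ξ η * (∫ x : ℝ, g₂ x η) + b ξ η * (∫ x : ℝ, g₁ x ξ)) := by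
    rw [hpt, integral_add I2' J12, integral_add J1 J2, integral_const_mul, integral_const_mul]
  rw [E1, add_sub_assoc, add_sub_cancel_right]
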